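/- arXiv:gr-qc/0507089 — 2 statements merged into one kernel-verified Lean document; each statement's English description precedes it below -/
import Mathlib

section
/- Let $w_0 : \mathbb{R} \to \mathbb{R}$ be defined by $w_0(t) = \sqrt{2}\,\sin(\pi t)$ for $t \in [0,1]$ and $w_0(t) = 0$ otherwise. Then $\int_{\mathbb{R}} w_0(t)^2\, dt = 1$ and $\frac{1}{2}\int_0^\infty u^2\, |\widehat{w_0}(u)|^2\, du = \frac{\pi^3}{2}$; i.e., $w_0$ attains the minimal value of the functional $I$ among normalized functions supported in $[0,1]$. -/
open MeasureTheory Set Real Filter Topology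

noncomputable def fourierTr (w : ℝ → ℝ) (ω : ℝ) : ℂ :=
  ∫ t : ℝ, (w t : ℂ) * Complex.exp (-(Complex.I * ω * t))

namespace Stmt13

noncomputable def w0 : ℝ → ℝ := fun t => if t ∈ Icc (0:ℝ) 1 then Real.sqrt 2 * Real.sin (π * t) else 0
noncomputable def gg : ℝ → ℝ := fun t => if t ∈ Icc (0:ℝ) 1 then Real.sqrt 2 * π * Real.cos (π * t) else 0
noncomputable def AA (u : ℝ) : ℝ := ∫ t : ℝ, gg t * Real.cos (u * t)
noncomputable def BB (u : ℝ) : ℝ := ∫ t : ℝ, gg t * Real.sin (u * t)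

lemma gg_meas : Measurable gg := Measurable.ite measurableSet_Icc (by fun_prop) measurable_const

lemma gg_bound (t : ℝ) : |gg t| ≤ indicator (Icc (0:ℝ) 1) (fun _ => Real.sqrt 2 * π) t := by
  unfold gg
  by_cases h : t ∈ Icc (0:ℝ) 1
  · simp only [h, if_pos, indicator_of_mem]
    rw [abs_mul]
    have h1 : |Real.sqrt 2 * π| = Real.sqrt 2 * π := abs_of_nonneg (by positivity)
    rw [h1]
    exact mul_le_of_le_one_right (by positivity) (abs_cos_le_one _)
  · simp [h]

lemma ind_integrable : Integrable (indicator (Icc (0:ℝ) 1) (fun _ => Real.sqrt 2 * π)) := by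
  rw [integrable_indicator_iff measurableSet_Icc]
  exact integrableOn_const (by simp)

lemma integrable_gg_mul {ψ : ℝ → ℝ} (hψ : Measurable ψ) (hD : ∀ t, |ψ t| ≤ 1) :
    Integrable (fun t => gg t * ψ t) := by
  apply Integrable.mono' ind_integrable ((gg_meas.mul hψ).aestronglyMeasurable)
  refine Filter.Eventually.of_forall (fun t => ?_)
  rw [Real.norm_eq_abs, Pi.mul_apply, abs_mul]
  calc |gg t| * |ψ t| ≤ |gg t| * 1 := by
        have := hD t; have := abs_nonneg (gg t); nlinarith [abs_nonneg (ψ t)]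
    _ = |gg t| := mul_one _
    _ ≤ _ := gg_bound t

lemma integrable_gg : Integrable gg := by
  have := integrable_gg_mul (ψ := fun _ => 1) measurable_const (fun t => by norm_num)
  simpa using this

lemma AA_cont : Continuous AA := by
  apply continuous_of_dominated (bound := fun t => |gg t|)
  · exact fun u => (gg_meas.mul (by fun_prop)).aestronglyMeasurable
  · intro u
    refine Filter.Eventually.of_forall (fun t => ?_)
    rw [Real.norm_eq_abs, abs_mul]
    exact mul_le_of_le_one_right (abs_nonneg _) (abs_cos_le_one _)
  · exact integrable_gg.abs
  · exact Filter.Eventually.of_forall (fun t => by fun_prop)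

lemma BB_cont : Continuous BB := by
  apply continuous_of_dominated (bound := fun t => |gg t|)
  · exact fun u => (gg_meas.mul (by fun_prop)).aestronglyMeasurable
  · intro u
    refine Filter.Eventually.of_forall (fun t => ?_)
    rw [Real.norm_eq_abs, abs_mul]
    exact mul_le_of_le_one_right (abs_nonneg _) (abs_sin_le_one _)
  · exact integrable_gg.abs
  · exact Filter.Eventually.of_forall (fun t => by fun_prop)

lemma AA_bound (u : ℝ) : |AA u| ≤ Real.sqrt 2 * π := by
  have h : |AA u| ≤ ∫ t : ℝ, indicator (Icc (0:ℝ) 1) (fun _ => Real.sqrt 2 * π) t := by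
    rw [← Real.norm_eq_abs]
    apply norm_integral_le_of_norm_le ind_integrable
    refine Filter.Eventually.of_forall (fun t => ?_)
    rw [Real.norm_eq_abs, abs_mul]
    calc |gg t| * |Real.cos (u*t)| ≤ |gg t| :=
          mul_le_of_le_one_right (abs_nonneg _) (abs_cos_le_one _)
      _ ≤ _ := gg_bound t
  calc |AA u| ≤ _ := h
    _ = Real.sqrt 2 * π := by
        rw [integral_indicator measurableSet_Icc]
        simp

lemma integrableOn_exp_cos {ε : ℝ} (hε : 0 < ε) (a : ℝ) :
    IntegrableOn (fun u => Real.exp (-(ε*u)) * Real.cos (a*u)) (Ioi (0:ℝ)) := by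
  apply Integrable.mono' ((exp_neg_integrableOn_Ioi 0 hε))
  · exact ((Real.continuous_exp.comp (continuous_const.mul continuous_id).neg).mul
      (Real.continuous_cos.comp (continuous_const.mul continuous_id))).aestronglyMeasurable
  · refine Filter.Eventually.of_forall (fun u => ?_)
    rw [Real.norm_eq_abs, abs_mul, abs_of_nonneg (Real.exp_nonneg _), neg_mul]
    exact mul_le_of_le_one_right (Real.exp_nonneg _) (abs_cos_le_one _)

lemma laplace_cos {ε : ℝ} (hε : 0 < ε) (a : ℝ) :
    ∫ u in Ioi (0:ℝ), Real.exp (-(ε*u)) * Real.cos (a*u) = ε / (ε^2 + a^2) := by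
  have hpos : 0 < ε^2 + a^2 := by positivity
  set F : ℝ → ℝ := fun u => Real.exp (-(ε*u)) * (a * Real.sin (a*u) - ε * Real.cos (a*u)) / (ε^2+a^2) with hF
  have hderiv : ∀ x ∈ Ici (0:ℝ), HasDerivAt F (Real.exp (-(ε*x)) * Real.cos (a*x)) x := by
    intro x _
    have h0 : HasDerivAt (fun u : ℝ => -(ε*u)) (-ε) x := by
      exact HasDerivAt.neg (by simpa using (hasDerivAt_id x).const_mul ε)
    have h1 : HasDerivAt (fun u => Real.exp (-(ε*u))) (Real.exp (-(ε*x)) * (-ε)) x :=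
      (Real.hasDerivAt_exp _).comp x h0
    have ha : HasDerivAt (fun u : ℝ => a*u) a x := by
      simpa using (hasDerivAt_id x).const_mul a
    have h2 : HasDerivAt (fun u => Real.sin (a*u)) (Real.cos (a*x) * a) x :=
      (Real.hasDerivAt_sin _).comp x ha
    have h3 : HasDerivAt (fun u => Real.cos (a*u)) (-Real.sin (a*x) * a) x :=
      (Real.hasDerivAt_cos _).comp x ha
    have h4 : HasDerivAt (fun u => a * Real.sin (a*u) - ε * Real.cos (a*u))
        (a * (Real.cos (a*x) * a) - ε * (-Real.sin (a*x) * a)) x :=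
      (h2.const_mul a).sub (h3.const_mul ε)
    have h5 := (h1.mul h4).div_const (ε^2+a^2)
    refine HasDerivAt.congr_deriv h5 ?_
    rw [div_eq_iff hpos.ne']
    ring
  have htend : Tendsto F atTop (𝓝 0) := by
    have hb : Tendsto (fun u : ℝ => Real.exp (-(ε*u))) atTop (𝓝 0) := by
      have h : Tendsto (fun u : ℝ => -(ε*u)) atTop atBot :=
        tendsto_neg_atBot_iff.2 (Tendsto.const_mul_atTop hε tendsto_id)
      exact Real.tendsto_exp_atBot.comp h
    have hsq : Tendsto (fun u : ℝ => Real.exp (-(ε*u)) * ((|a| + ε) / (ε^2+a^2))) atTop (𝓝 0) := by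
      simpa using hb.mul_const ((|a| + ε) / (ε^2+a^2))
    apply squeeze_zero_norm _ hsq
    intro u
    rw [hF]
    simp only [Real.norm_eq_abs, abs_div, abs_mul]
    rw [abs_of_nonneg hpos.le, abs_of_nonneg (Real.exp_nonneg _), mul_div_assoc]
    apply mul_le_mul_of_nonneg_left _ (Real.exp_nonneg _)
    gcongr
    calc |a * Real.sin (a*u) - ε * Real.cos (a*u)|
        ≤ |a * Real.sin (a*u)| + |ε * Real.cos (a*u)| := abs_sub _ _
      _ ≤ |a| * 1 + |ε| * 1 := by
          rw [abs_mul, abs_mul]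
          gcongr
          · exact abs_sin_le_one _
          · exact abs_cos_le_one _
      _ = |a| + ε := by rw [abs_of_pos hε]; ring
  have := integral_Ioi_of_hasDerivAt_of_tendsto' hderiv (integrableOn_exp_cos hε a) htend
  rw [this]
  simp [hF]
  field_simp

lemma BB_bound (u : ℝ) : |BB u| ≤ Real.sqrt 2 * π := by
  have h : |BB u| ≤ ∫ t : ℝ, indicator (Icc (0:ℝ) 1) (fun _ => Real.sqrt 2 * π) t := by
    rw [← Real.norm_eq_abs]
    apply norm_integral_le_of_norm_le ind_integrable
    refine Filter.Eventually.of_forall (fun t => ?_)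
    rw [Real.norm_eq_abs, abs_mul]
    calc |gg t| * |Real.sin (u*t)| ≤ |gg t| :=
          mul_le_of_le_one_right (abs_nonneg _) (abs_sin_le_one _)
      _ ≤ _ := gg_bound t
  calc |BB u| ≤ _ := h
    _ = Real.sqrt 2 * π := by
        rw [integral_indicator measurableSet_Icc]
        simp

lemma indC_integrable (C : ℝ) : Integrable (indicator (Icc (0:ℝ) 1) (fun _ => C)) := by
  rw [integrable_indicator_iff measurableSet_Icc]
  exact integrableOn_const (by simp)

lemma fubini_swap {ε C : ℝ} (hε : 0 < ε) (φ : ℝ → ℝ → ℝ)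
    (hm : AEStronglyMeasurable (Function.uncurry φ) ((volume.restrict (Ioi 0)).prod volume))
    (hb : ∀ u t, |φ u t| ≤ Real.exp (-(ε*u)) * indicator (Icc (0:ℝ) 1) (fun _ => C) t) :
    ∫ u in Ioi (0:ℝ), ∫ t : ℝ, φ u t = ∫ t : ℝ, ∫ u in Ioi (0:ℝ), φ u t := by
  apply integral_integral_swap
  apply Integrable.mono'
    ((exp_neg_integrableOn_Ioi 0 hε).mul_prod (indC_integrable C)) hm
  refine Filter.Eventually.of_forall (fun p => ?_)
  have := hb p.1 p.2
  simpa [Function.uncurry, Real.norm_eq_abs, neg_mul] using this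

lemma step1 {ε : ℝ} (u : ℝ) :
    Real.exp (-(ε*u)) * (AA u^2 + BB u^2)
      = ∫ s : ℝ, gg s * (Real.exp (-(ε*u)) * (Real.cos (u*s) * AA u + Real.sin (u*s) * BB u)) := by
  have h1 : Integrable (fun s : ℝ => gg s * Real.cos (u*s)) :=
    integrable_gg_mul (by fun_prop) (fun t => abs_cos_le_one _)
  have h2 : Integrable (fun s : ℝ => gg s * Real.sin (u*s)) :=
    integrable_gg_mul (by fun_prop) (fun t => abs_sin_le_one _)
  have e : (fun s => gg s * (Real.exp (-(ε*u)) * (Real.cos (u*s) * AA u + Real.sin (u*s) * BB u)))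
      = fun s => (gg s * Real.cos (u*s)) * (Real.exp (-(ε*u)) * AA u)
          + (gg s * Real.sin (u*s)) * (Real.exp (-(ε*u)) * BB u) := by
    funext s; ring
  rw [e, integral_add (h1.mul_const _) (h2.mul_const _), integral_mul_const, integral_mul_const]
  rw [show (∫ s : ℝ, gg s * Real.cos (u*s)) = AA u from rfl,
      show (∫ s : ℝ, gg s * Real.sin (u*s)) = BB u from rfl]
  ring

lemma step2 {ε : ℝ} (u s : ℝ) :
    Real.exp (-(ε*u)) * (Real.cos (u*s) * AA u + Real.sin (u*s) * BB u)
      = ∫ t : ℝ, gg t * (Real.exp (-(ε*u)) * Real.cos (u*s - u*t)) := by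
  have h1 : Integrable (fun t : ℝ => gg t * Real.cos (u*t)) :=
    integrable_gg_mul (by fun_prop) (fun t => abs_cos_le_one _)
  have h2 : Integrable (fun t : ℝ => gg t * Real.sin (u*t)) :=
    integrable_gg_mul (by fun_prop) (fun t => abs_sin_le_one _)
  have e : (fun t => gg t * (Real.exp (-(ε*u)) * Real.cos (u*s - u*t)))
      = fun t => (gg t * Real.cos (u*t)) * (Real.exp (-(ε*u)) * Real.cos (u*s))
          + (gg t * Real.sin (u*t)) * (Real.exp (-(ε*u)) * Real.sin (u*s)) := by
    funext t; rw [Real.cos_sub]; ring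
  rw [e, integral_add (h1.mul_const _) (h2.mul_const _), integral_mul_const, integral_mul_const]
  rw [show (∫ t : ℝ, gg t * Real.cos (u*t)) = AA u from rfl,
      show (∫ t : ℝ, gg t * Real.sin (u*t)) = BB u from rfl]
  ring

lemma subst_step {ε : ℝ} (hε : 0 < ε) (s : ℝ) :
    ∫ t : ℝ, gg t * (ε / (ε^2 + (s-t)^2)) = ∫ v : ℝ, gg (s + ε*v) * (1+v^2)⁻¹ := by
  have h1 : ∫ t : ℝ, gg t * (ε / (ε^2 + (s-t)^2))
      = ∫ x : ℝ, gg (s+x) * (ε / (ε^2 + x^2)) := by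
    rw [← integral_add_left_eq_self (μ := volume)
      (fun t => gg t * (ε / (ε^2 + (s-t)^2))) s]
    congr 1; funext x; ring_nf
  have h2 : ∫ v : ℝ, gg (s + ε*v) * (ε / (ε^2 + (ε*v)^2))
      = ε⁻¹ * ∫ x : ℝ, gg (s+x) * (ε / (ε^2 + x^2)) := by
    have := MeasureTheory.Measure.integral_comp_mul_left
      (fun x => gg (s+x) * (ε / (ε^2 + x^2))) ε
    simpa [abs_of_pos (inv_pos.2 hε), smul_eq_mul] using this
  have h3 : ∫ x : ℝ, gg (s+x) * (ε / (ε^2 + x^2))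
      = ε * ∫ v : ℝ, gg (s + ε*v) * (ε / (ε^2 + (ε*v)^2)) := by
    rw [h2]; field_simp; congr 1; funext x; ring
  rw [h1, h3, ← integral_const_mul]
  congr 1; funext v
  have hne : ε^2 + (ε*v)^2 ≠ 0 := by positivity
  have h1v : (1:ℝ) + v^2 ≠ 0 := by positivity
  field_simp

lemma phi1_meas {ε : ℝ} :
    AEStronglyMeasurable (Function.uncurry (fun u s =>
        gg s * (Real.exp (-(ε*u)) * (Real.cos (u*s) * AA u + Real.sin (u*s) * BB u))))
      ((volume.restrict (Ioi 0)).prod volume) := by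
  apply Measurable.aestronglyMeasurable
  have m1 : Measurable fun p : ℝ × ℝ => gg p.2 := gg_meas.comp measurable_snd
  have m2 : Measurable fun p : ℝ × ℝ => Real.exp (-(ε*p.1)) :=
    Real.measurable_exp.comp ((measurable_fst.const_mul ε).neg)
  have m3 : Measurable fun p : ℝ × ℝ => Real.cos (p.1*p.2) :=
    Real.measurable_cos.comp (measurable_fst.mul measurable_snd)
  have m4 : Measurable fun p : ℝ × ℝ => Real.sin (p.1*p.2) :=
    Real.measurable_sin.comp (measurable_fst.mul measurable_snd)
  have m5 : Measurable fun p : ℝ × ℝ => AA p.1 := AA_cont.measurable.comp measurable_fst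
  have m6 : Measurable fun p : ℝ × ℝ => BB p.1 := BB_cont.measurable.comp measurable_fst
  exact m1.mul (m2.mul ((m3.mul m5).add (m4.mul m6)))

lemma phi1_bound {ε : ℝ} (u s : ℝ) :
    |gg s * (Real.exp (-(ε*u)) * (Real.cos (u*s) * AA u + Real.sin (u*s) * BB u))|
      ≤ Real.exp (-(ε*u)) * indicator (Icc (0:ℝ) 1)
          (fun _ => Real.sqrt 2 * π * (2 * (Real.sqrt 2 * π))) s := by
  by_cases h : s ∈ Icc (0:ℝ) 1
  · have hg : |gg s| ≤ Real.sqrt 2 * π := by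
      have := gg_bound s; rwa [indicator_of_mem h] at this
    have he : (0:ℝ) ≤ Real.exp (-(ε*u)) := (Real.exp_pos _).le
    rw [indicator_of_mem h, abs_mul]
    have h2 : |Real.exp (-(ε*u)) * (Real.cos (u*s) * AA u + Real.sin (u*s) * BB u)|
        ≤ Real.exp (-(ε*u)) * (2 * (Real.sqrt 2 * π)) := by
      rw [abs_mul, abs_of_nonneg he]
      apply mul_le_mul_of_nonneg_left _ he
      calc |Real.cos (u*s) * AA u + Real.sin (u*s) * BB u|
          ≤ |Real.cos (u*s) * AA u| + |Real.sin (u*s) * BB u| := abs_add_le _ _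
        _ ≤ |AA u| + |BB u| := by
            rw [abs_mul, abs_mul]
            gcongr
            · calc |Real.cos (u*s)| * |AA u| ≤ 1 * |AA u| :=
                    mul_le_mul_of_nonneg_right (abs_cos_le_one _) (abs_nonneg _)
                _ = |AA u| := one_mul _
            · calc |Real.sin (u*s)| * |BB u| ≤ 1 * |BB u| :=
                    mul_le_mul_of_nonneg_right (abs_sin_le_one _) (abs_nonneg _)
                _ = |BB u| := one_mul _
        _ ≤ 2 * (Real.sqrt 2 * π) := by
            have := AA_bound u; have := BB_bound u; linarith
    have hgn : (0:ℝ) ≤ |gg s| := abs_nonneg _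
    have hC : (0:ℝ) ≤ Real.sqrt 2 * π := by positivity
    calc |gg s| * |Real.exp (-(ε*u)) * (Real.cos (u*s) * AA u + Real.sin (u*s) * BB u)|
        ≤ (Real.sqrt 2 * π) * (Real.exp (-(ε*u)) * (2 * (Real.sqrt 2 * π))) := by
          apply mul_le_mul hg h2 (abs_nonneg _) hC
      _ = Real.exp (-(ε*u)) * (Real.sqrt 2 * π * (2 * (Real.sqrt 2 * π))) := by ring
  · have hg : gg s = 0 := by simp [gg, h]
    rw [indicator_of_notMem h, hg]
    simp [(Real.exp_pos _).le]

lemma phi2_meas {ε : ℝ} (s : ℝ) :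
    AEStronglyMeasurable (Function.uncurry (fun u t =>
        gg t * (Real.exp (-(ε*u)) * Real.cos (u*s - u*t))))
      ((volume.restrict (Ioi 0)).prod volume) := by
  apply Measurable.aestronglyMeasurable
  have m1 : Measurable fun p : ℝ × ℝ => gg p.2 := gg_meas.comp measurable_snd
  have m2 : Measurable fun p : ℝ × ℝ => Real.exp (-(ε*p.1)) :=
    Real.measurable_exp.comp ((measurable_fst.const_mul ε).neg)
  have m3 : Measurable fun p : ℝ × ℝ => Real.cos (p.1*s - p.1*p.2) :=
    Real.measurable_cos.comp ((measurable_fst.mul_const s).sub (measurable_fst.mul measurable_snd))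
  exact m1.mul (m2.mul m3)

lemma phi2_bound {ε : ℝ} (s u t : ℝ) :
    |gg t * (Real.exp (-(ε*u)) * Real.cos (u*s - u*t))|
      ≤ Real.exp (-(ε*u)) * indicator (Icc (0:ℝ) 1) (fun _ => Real.sqrt 2 * π) t := by
  by_cases h : t ∈ Icc (0:ℝ) 1
  · have hg : |gg t| ≤ Real.sqrt 2 * π := by
      have := gg_bound t; rwa [indicator_of_mem h] at this
    have he : (0:ℝ) ≤ Real.exp (-(ε*u)) := (Real.exp_pos _).le
    rw [indicator_of_mem h, abs_mul]
    have h2 : |Real.exp (-(ε*u)) * Real.cos (u*s - u*t)| ≤ Real.exp (-(ε*u)) := by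
      rw [abs_mul, abs_of_nonneg he]
      exact mul_le_of_le_one_right he (abs_cos_le_one _)
    calc |gg t| * |Real.exp (-(ε*u)) * Real.cos (u*s - u*t)|
        ≤ (Real.sqrt 2 * π) * Real.exp (-(ε*u)) :=
          mul_le_mul hg h2 (abs_nonneg _) (by positivity)
      _ = Real.exp (-(ε*u)) * (Real.sqrt 2 * π) := by ring
  · have hg : gg t = 0 := by simp [gg, h]
    rw [indicator_of_notMem h, hg]
    simp [(Real.exp_pos _).le]

lemma Keps {ε : ℝ} (hε : 0 < ε) :
    ∫ u in Ioi (0:ℝ), Real.exp (-(ε*u)) * (AA u^2 + BB u^2)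
      = ∫ s : ℝ, gg s * ∫ v : ℝ, gg (s + ε*v) * (1+v^2)⁻¹ := by
  calc ∫ u in Ioi (0:ℝ), Real.exp (-(ε*u)) * (AA u^2 + BB u^2)
      = ∫ u in Ioi (0:ℝ), ∫ s : ℝ,
          gg s * (Real.exp (-(ε*u)) * (Real.cos (u*s) * AA u + Real.sin (u*s) * BB u)) :=
        integral_congr_ae (Filter.Eventually.of_forall (fun u => step1 u))
    _ = ∫ s : ℝ, ∫ u in Ioi (0:ℝ),
          gg s * (Real.exp (-(ε*u)) * (Real.cos (u*s) * AA u + Real.sin (u*s) * BB u)) :=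
        fubini_swap hε _ phi1_meas (fun u s => phi1_bound u s)
    _ = ∫ s : ℝ, gg s * ∫ v : ℝ, gg (s + ε*v) * (1+v^2)⁻¹ := by
        refine integral_congr_ae (Filter.Eventually.of_forall (fun s => ?_))
        simp only []
        rw [integral_const_mul]
        congr 1
        calc ∫ u in Ioi (0:ℝ),
              Real.exp (-(ε*u)) * (Real.cos (u*s) * AA u + Real.sin (u*s) * BB u)
            = ∫ u in Ioi (0:ℝ), ∫ t : ℝ,
                gg t * (Real.exp (-(ε*u)) * Real.cos (u*s - u*t)) :=
              integral_congr_ae (Filter.Eventually.of_forall (fun u => step2 u s))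
          _ = ∫ t : ℝ, ∫ u in Ioi (0:ℝ),
                gg t * (Real.exp (-(ε*u)) * Real.cos (u*s - u*t)) :=
              fubini_swap hε _ (phi2_meas s) (fun u t => phi2_bound s u t)
          _ = ∫ t : ℝ, gg t * (ε / (ε^2 + (s-t)^2)) := by
              refine integral_congr_ae (Filter.Eventually.of_forall (fun t => ?_))
              simp only []
              rw [integral_const_mul]
              congr 1
              have harg : ∀ u : ℝ, u*s - u*t = (s-t)*u := fun u => by ring
              calc ∫ u in Ioi (0:ℝ), Real.exp (-(ε*u)) * Real.cos (u*s - u*t)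
                  = ∫ u in Ioi (0:ℝ), Real.exp (-(ε*u)) * Real.cos ((s-t)*u) := by
                    refine integral_congr_ae (Filter.Eventually.of_forall (fun u => ?_))
                    simp only []
                    rw [harg u]
                _ = ε / (ε^2 + (s-t)^2) := laplace_cos hε (s-t)
          _ = ∫ v : ℝ, gg (s + ε*v) * (1+v^2)⁻¹ := subst_step hε s

lemma gg_abs_le (t : ℝ) : |gg t| ≤ Real.sqrt 2 * π := by
  refine le_trans (gg_bound t) ?_
  by_cases h : t ∈ Icc (0:ℝ) 1
  · rw [indicator_of_mem h]
  · rw [indicator_of_notMem h]; positivity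

lemma gg_contAt {s : ℝ} (hs : s ≠ 0) (hs1 : s ≠ 1) : ContinuousAt gg s := by
  by_cases h0 : s < 0
  · have hev : (fun _ : ℝ => (0:ℝ)) =ᶠ[𝓝 s] gg := by
      filter_upwards [Iio_mem_nhds h0] with t ht
      have : t ∉ Icc (0:ℝ) 1 := fun hm => absurd hm.1 (not_le.2 ht)
      simp [gg, this]
    exact continuousAt_const.congr hev
  by_cases h1 : 1 < s
  · have hev : (fun _ : ℝ => (0:ℝ)) =ᶠ[𝓝 s] gg := by
      filter_upwards [Ioi_mem_nhds h1] with t ht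
      have : t ∉ Icc (0:ℝ) 1 := fun hm => absurd hm.2 (not_le.2 ht)
      simp [gg, this]
    exact continuousAt_const.congr hev
  have hsI : s ∈ Ioo (0:ℝ) 1 :=
    ⟨lt_of_le_of_ne (not_lt.1 h0) (Ne.symm hs), lt_of_le_of_ne (not_lt.1 h1) hs1⟩
  have hev : (fun t => Real.sqrt 2 * π * Real.cos (π*t)) =ᶠ[𝓝 s] gg := by
    filter_upwards [Ioo_mem_nhds hsI.1 hsI.2] with t ht
    simp [gg, Ioo_subset_Icc_self ht]
  exact (Continuous.continuousAt (by fun_prop)).congr hev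

lemma inner_limit {s : ℝ} (hs : s ≠ 0) (hs1 : s ≠ 1) {e : ℕ → ℝ}
    (hlim : Tendsto e atTop (𝓝 0)) :
    Tendsto (fun n => ∫ v : ℝ, gg (s + e n * v) * (1+v^2)⁻¹) atTop (𝓝 (gg s * π)) := by
  have h : Tendsto (fun n => ∫ v : ℝ, gg (s + e n * v) * (1+v^2)⁻¹) atTop
      (𝓝 (∫ v : ℝ, gg s * (1+v^2)⁻¹)) := by
    apply tendsto_integral_of_dominated_convergence
      (bound := fun v => (Real.sqrt 2 * π) * (1+v^2)⁻¹)
    · intro n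
      exact ((gg_meas.comp (measurable_const.add (measurable_id.const_mul (e n)))).mul
        (by fun_prop : Measurable fun v : ℝ => (1+v^2)⁻¹)).aestronglyMeasurable
    · exact integrable_inv_one_add_sq.const_mul _
    · intro n
      refine Filter.Eventually.of_forall (fun v => ?_)
      rw [Real.norm_eq_abs, abs_mul]
      have h1 : |(1+v^2)⁻¹| = (1+v^2)⁻¹ := abs_of_nonneg (by positivity)
      rw [h1]
      exact mul_le_mul_of_nonneg_right (gg_abs_le _) (by positivity)
    · refine Filter.Eventually.of_forall (fun v => ?_)
      have harg : Tendsto (fun n => s + e n * v) atTop (𝓝 s) := by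
        have := (hlim.mul_const v).const_add s
        simpa using this
      exact ((gg_contAt hs hs1).tendsto.comp harg).mul_const _
  have heq : ∫ v : ℝ, gg s * (1+v^2)⁻¹ = gg s * π := by
    rw [integral_const_mul, integral_univ_inv_one_add_sq]
  rwa [heq] at h

lemma gg_sq_integral : ∫ s : ℝ, gg s * gg s = π^2 := by
  have e : (fun s => gg s * gg s) = indicator (Icc (0:ℝ) 1)
      (fun t => 2*π^2*Real.cos (π*t)^2) := by
    funext t
    by_cases h : t ∈ Icc (0:ℝ) 1
    · rw [indicator_of_mem h]
      simp only [gg, h, if_pos]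
      have h2 : Real.sqrt 2 * Real.sqrt 2 = 2 := Real.mul_self_sqrt (by norm_num)
      nlinarith [h2]
    · rw [indicator_of_notMem h]; simp [gg, h]
  rw [e, integral_indicator measurableSet_Icc,
      integral_Icc_eq_integral_Ioc, ← intervalIntegral.integral_of_le (by norm_num : (0:ℝ) ≤ 1)]
  have hderiv : ∀ t ∈ uIcc (0:ℝ) 1, HasDerivAt
      (fun t => π^2*t + π*(Real.sin (π*t)*Real.cos (π*t)))
      (2*π^2*Real.cos (π*t)^2) t := by
    intro t _
    have hid : HasDerivAt (fun t : ℝ => π*t) π t := by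
      simpa using (hasDerivAt_id t).const_mul π
    have hsin : HasDerivAt (fun t : ℝ => Real.sin (π*t)) (Real.cos (π*t) * π) t :=
      (Real.hasDerivAt_sin _).comp t hid
    have hcos : HasDerivAt (fun t : ℝ => Real.cos (π*t)) (-Real.sin (π*t) * π) t :=
      (Real.hasDerivAt_cos _).comp t hid
    have h1 : HasDerivAt (fun t : ℝ => π^2*t) (π^2) t := by
      simpa using (hasDerivAt_id t).const_mul (π^2)
    have h2 := ((hsin.mul hcos).const_mul π)
    have h3 := h1.add h2
    refine HasDerivAt.congr_deriv h3 ?_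
    have hpy : Real.sin (π*t)^2 + Real.cos (π*t)^2 = 1 := Real.sin_sq_add_cos_sq _
    linear_combination (-π^2) * hpy
  rw [intervalIntegral.integral_eq_sub_of_hasDerivAt hderiv]
  · simp [Real.sin_pi, Real.cos_pi]
  · apply Continuous.intervalIntegrable
    fun_prop

lemma outer_limit {e : ℕ → ℝ} (hlim : Tendsto e atTop (𝓝 0)) :
    Tendsto (fun n => ∫ s : ℝ, gg s * ∫ v : ℝ, gg (s + e n * v) * (1+v^2)⁻¹)
      atTop (𝓝 (π^3)) := by
  have key : Tendsto (fun n => ∫ s : ℝ, gg s * ∫ v : ℝ, gg (s + e n * v) * (1+v^2)⁻¹)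
      atTop (𝓝 (∫ s : ℝ, gg s * (gg s * π))) := by
    apply tendsto_integral_of_dominated_convergence
      (bound := fun s => |gg s| * (Real.sqrt 2 * π * π))
    · intro n
      apply Measurable.aestronglyMeasurable
      apply gg_meas.mul
      have hm : Measurable (Function.uncurry fun s v => gg (s + e n * v) * (1+v^2)⁻¹) := by
        apply Measurable.mul
        · exact gg_meas.comp (measurable_fst.add (measurable_snd.const_mul (e n)))
        · exact (by fun_prop : Measurable fun p : ℝ × ℝ => (1+p.2^2)⁻¹)
      exact (hm.stronglyMeasurable.integral_prod_right').measurable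
    · exact (integrable_gg.abs).mul_const _
    · intro n
      refine Filter.Eventually.of_forall (fun s => ?_)
      rw [Real.norm_eq_abs, abs_mul]
      apply mul_le_mul_of_nonneg_left _ (abs_nonneg _)
      have hint : Integrable (fun v : ℝ => (Real.sqrt 2 * π) * (1+v^2)⁻¹) :=
        integrable_inv_one_add_sq.const_mul _
      calc |∫ v : ℝ, gg (s + e n * v) * (1+v^2)⁻¹|
          ≤ ∫ v : ℝ, (Real.sqrt 2 * π) * (1+v^2)⁻¹ := by
            rw [← Real.norm_eq_abs]
            apply norm_integral_le_of_norm_le hint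
            refine Filter.Eventually.of_forall (fun v => ?_)
            rw [Real.norm_eq_abs, abs_mul, abs_of_nonneg (by positivity : (0:ℝ) ≤ (1+v^2)⁻¹)]
            exact mul_le_mul_of_nonneg_right (gg_abs_le _) (by positivity)
        _ = Real.sqrt 2 * π * π := by
            rw [integral_const_mul, integral_univ_inv_one_add_sq]
    · have hae : ∀ᵐ s : ℝ, s ≠ 0 ∧ s ≠ 1 := by
        rw [ae_iff]
        have hset : {s : ℝ | ¬ (s ≠ 0 ∧ s ≠ 1)} = {0, 1} := by
          ext x; simp [not_and_or, or_iff_not_imp_left]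
        rw [hset]
        exact ((Set.countable_singleton (1:ℝ)).insert 0).measure_zero _
      filter_upwards [hae] with s hs
      exact (inner_limit hs.1 hs.2 hlim).const_mul (gg s)
  have heq : ∫ s : ℝ, gg s * (gg s * π) = π^3 := by
    have e2 : (fun s => gg s * (gg s * π)) = fun s => (gg s * gg s) * π := by
      funext s; ring
    rw [e2, integral_mul_const, gg_sq_integral]
    ring
  rwa [heq] at key

lemma f_nonneg (u : ℝ) : 0 ≤ AA u^2 + BB u^2 := by positivity

lemma f_bound (u : ℝ) : AA u^2 + BB u^2 ≤ 2*(Real.sqrt 2 * π)^2 := by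
  have hA := AA_bound u; have hB := BB_bound u
  have h1 : AA u^2 ≤ (Real.sqrt 2*π)^2 := by
    rw [← sq_abs]; exact pow_le_pow_left₀ (abs_nonneg _) hA 2
  have h2 : BB u^2 ≤ (Real.sqrt 2*π)^2 := by
    rw [← sq_abs]; exact pow_le_pow_left₀ (abs_nonneg _) hB 2
  linarith

lemma ef_integrable {ε : ℝ} (hε : 0 < ε) :
    IntegrableOn (fun u => Real.exp (-(ε*u)) * (AA u^2 + BB u^2)) (Ioi (0:ℝ)) := by
  apply Integrable.mono' ((exp_neg_integrableOn_Ioi 0 hε).mul_const (2*(Real.sqrt 2*π)^2))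
  · exact ((Real.continuous_exp.comp ((continuous_const.mul continuous_id).neg)).mul
      ((AA_cont.pow 2).add (BB_cont.pow 2))).aestronglyMeasurable.restrict
  · refine Filter.Eventually.of_forall (fun u => ?_)
    rw [Real.norm_eq_abs, abs_of_nonneg (mul_nonneg (Real.exp_nonneg _) (f_nonneg u)), neg_mul]
    exact mul_le_mul_of_nonneg_left (f_bound u) (Real.exp_nonneg _)

lemma main_integral : ∫ u in Ioi (0:ℝ), (AA u^2 + BB u^2) = π^3 := by
  have hone : ∀ n : ℕ, (0:ℝ) < 1/((n:ℝ)+1) := fun n => by positivity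
  have hlim : Tendsto (fun n : ℕ => 1/((n:ℝ)+1)) atTop (𝓝 0) :=
    tendsto_one_div_add_atTop_nhds_zero_nat
  have hcont : Continuous fun u => AA u^2 + BB u^2 := (AA_cont.pow 2).add (BB_cont.pow 2)
  have h3 : Tendsto (fun n : ℕ => ∫ u in Ioi (0:ℝ),
      Real.exp (-((1/((n:ℝ)+1))*u)) * (AA u^2+BB u^2)) atTop (𝓝 (π^3)) := by
    have he : ∀ n : ℕ, ∫ u in Ioi (0:ℝ), Real.exp (-((1/((n:ℝ)+1))*u)) * (AA u^2 + BB u^2)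
        = ∫ s : ℝ, gg s * ∫ v : ℝ, gg (s + (1/((n:ℝ)+1))*v) * (1+v^2)⁻¹ :=
      fun n => Keps (hone n)
    rw [funext he]
    exact outer_limit hlim
  have h2 : Tendsto (fun n : ℕ => ∫⁻ u in Ioi (0:ℝ),
      ENNReal.ofReal (Real.exp (-((1/((n:ℝ)+1))*u)) * (AA u^2+BB u^2))) atTop
      (𝓝 (∫⁻ u in Ioi (0:ℝ), ENNReal.ofReal (AA u^2+BB u^2))) := by
    have hfinal : ∀ᵐ u ∂(volume.restrict (Ioi (0:ℝ))), Tendsto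
        (fun n : ℕ => ENNReal.ofReal (Real.exp (-((1/((n:ℝ)+1))*u)) * (AA u^2+BB u^2)))
        atTop (𝓝 (ENNReal.ofReal (AA u^2+BB u^2))) := by
      refine Filter.Eventually.of_forall (fun u => ?_)
      apply (ENNReal.continuous_ofReal.tendsto _).comp
      have hexp : Tendsto (fun n : ℕ => Real.exp (-((1/((n:ℝ)+1))*u))) atTop (𝓝 1) := by
        have h := (hlim.mul_const u).neg
        have h2 := (Real.continuous_exp.tendsto 0).comp (by simpa using h)
        simpa [Function.comp_def] using h2
      have := hexp.mul_const (AA u^2+BB u^2)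
      simpa using this
    apply lintegral_tendsto_of_tendsto_of_monotone _ _ hfinal
    · intro n
      exact (ENNReal.measurable_ofReal.comp
        ((Real.measurable_exp.comp ((measurable_id.const_mul _).neg)).mul
          hcont.measurable)).aemeasurable
    · refine (ae_restrict_mem measurableSet_Ioi).mono (fun u hu => ?_)
      intro n m hnm
      apply ENNReal.ofReal_le_ofReal
      apply mul_le_mul_of_nonneg_right _ (f_nonneg u)
      apply Real.exp_le_exp.2
      have hm : (1:ℝ)/((m:ℝ)+1) ≤ 1/((n:ℝ)+1) := by
        apply one_div_le_one_div_of_le (by positivity)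
        have : (n:ℝ) ≤ (m:ℝ) := Nat.cast_le.2 hnm
        linarith
      have hu' : (0:ℝ) < u := hu
      nlinarith
  have h1 : ∀ n : ℕ, ∫⁻ u in Ioi (0:ℝ),
      ENNReal.ofReal (Real.exp (-((1/((n:ℝ)+1))*u)) * (AA u^2+BB u^2))
      = ENNReal.ofReal (∫ u in Ioi (0:ℝ),
          Real.exp (-((1/((n:ℝ)+1))*u)) * (AA u^2+BB u^2)) := by
    intro n
    rw [← ofReal_integral_eq_lintegral_ofReal (ef_integrable (hone n))
      (Filter.Eventually.of_forall (fun u => mul_nonneg (Real.exp_nonneg _) (f_nonneg u)))]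
  have h4 : ∫⁻ u in Ioi (0:ℝ), ENNReal.ofReal (AA u^2+BB u^2) = ENNReal.ofReal (π^3) := by
    apply tendsto_nhds_unique _ ((ENNReal.continuous_ofReal.tendsto _).comp h3)
    have h2' := h2
    simp only [h1] at h2'
    exact h2'
  rw [integral_eq_lintegral_of_nonneg_ae (Filter.Eventually.of_forall f_nonneg)
    hcont.aestronglyMeasurable.restrict, h4, ENNReal.toReal_ofReal (by positivity)]

lemma fourierTr_w0_interval (u : ℝ) :
    fourierTr w0 u = ∫ t in (0:ℝ)..1,
      ((Real.sqrt 2 * Real.sin (π*t) : ℝ) : ℂ) * Complex.exp (-(Complex.I * u * t)) := by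
  have e : (fun t : ℝ => (w0 t : ℂ) * Complex.exp (-(Complex.I * u * t)))
      = indicator (Icc (0:ℝ) 1)
          (fun t => ((Real.sqrt 2 * Real.sin (π*t) : ℝ) : ℂ) * Complex.exp (-(Complex.I * u * t))) := by
    funext t
    by_cases h : t ∈ Icc (0:ℝ) 1 <;> simp [w0, h]
  rw [fourierTr, e, integral_indicator measurableSet_Icc,
      integral_Icc_eq_integral_Ioc, ← intervalIntegral.integral_of_le (by norm_num : (0:ℝ) ≤ 1)]

lemma GG_interval (u : ℝ) :
    (∫ t : ℝ, (gg t : ℂ) * Complex.exp (-(Complex.I * u * t)))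
      = ∫ t in (0:ℝ)..1,
          ((Real.sqrt 2 * π * Real.cos (π*t) : ℝ) : ℂ) * Complex.exp (-(Complex.I * u * t)) := by
  have e : (fun t : ℝ => (gg t : ℂ) * Complex.exp (-(Complex.I * u * t)))
      = indicator (Icc (0:ℝ) 1)
          (fun t => ((Real.sqrt 2 * π * Real.cos (π*t) : ℝ) : ℂ) * Complex.exp (-(Complex.I * u * t))) := by
    funext t
    by_cases h : t ∈ Icc (0:ℝ) 1 <;> simp [gg, h]
  rw [e, integral_indicator measurableSet_Icc,
      integral_Icc_eq_integral_Ioc, ← intervalIntegral.integral_of_le (by norm_num : (0:ℝ) ≤ 1)]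

lemma ibp (u : ℝ) :
    (∫ t in (0:ℝ)..1, ((Real.sqrt 2 * π * Real.cos (π*t) : ℝ) : ℂ) * Complex.exp (-(Complex.I * u * t)))
      = Complex.I * u * ∫ t in (0:ℝ)..1,
          ((Real.sqrt 2 * Real.sin (π*t) : ℝ) : ℂ) * Complex.exp (-(Complex.I * u * t)) := by
  set c : ℂ := -(Complex.I * u) with hc
  have key : ∀ t ∈ uIcc (0:ℝ) 1, HasDerivAt
      (fun t : ℝ => ((Real.sqrt 2 * Real.sin (π*t) : ℝ) : ℂ) * Complex.exp (-(Complex.I * u * t)))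
      (((Real.sqrt 2 * (Real.cos (π*t) * π) : ℝ) : ℂ) * Complex.exp (-(Complex.I * u * t))
        + ((Real.sqrt 2 * Real.sin (π*t) : ℝ) : ℂ)
            * (Complex.exp (-(Complex.I * u * t)) * c)) t := by
    intro t _
    have hid : HasDerivAt (fun t : ℝ => π*t) π t := by
      simpa using (hasDerivAt_id t).const_mul π
    have hsin : HasDerivAt (fun t : ℝ => Real.sqrt 2 * Real.sin (π*t))
        (Real.sqrt 2 * (Real.cos (π*t) * π)) t :=
      ((Real.hasDerivAt_sin _).comp t hid).const_mul (Real.sqrt 2)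
    have hsin' : HasDerivAt (fun t : ℝ => ((Real.sqrt 2 * Real.sin (π*t) : ℝ) : ℂ))
        ((Real.sqrt 2 * (Real.cos (π*t) * π) : ℝ) : ℂ) t := hsin.ofReal_comp
    have hexpC : HasDerivAt (fun z : ℂ => Complex.exp (c * z))
        (Complex.exp (c * t) * c) (t : ℂ) := by
      simpa [mul_comm] using ((hasDerivAt_id (t:ℂ)).const_mul c).cexp
    have hexp : HasDerivAt (fun t : ℝ => Complex.exp (c * t))
        (Complex.exp (c * t) * c) t := hexpC.comp_ofReal
    have harg : ∀ t : ℝ, c * (t:ℂ) = -(Complex.I * u * t) := by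
      intro t; rw [hc]; ring
    have := hsin'.mul hexp
    simp only [harg] at this
    exact this
  have hint : IntervalIntegrable
      (fun t : ℝ => ((Real.sqrt 2 * (Real.cos (π*t) * π) : ℝ) : ℂ) * Complex.exp (-(Complex.I * u * t))
        + ((Real.sqrt 2 * Real.sin (π*t) : ℝ) : ℂ) * (Complex.exp (-(Complex.I * u * t)) * c))
      volume 0 1 := by
    apply Continuous.intervalIntegrable
    fun_prop
  have h0 := intervalIntegral.integral_eq_sub_of_hasDerivAt key hint
  have h0' : (∫ t in (0:ℝ)..1,
      (((Real.sqrt 2 * (Real.cos (π*t) * π) : ℝ) : ℂ) * Complex.exp (-(Complex.I * u * t))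
        + ((Real.sqrt 2 * Real.sin (π*t) : ℝ) : ℂ) * (Complex.exp (-(Complex.I * u * t)) * c))) = 0 := by
    rw [h0]
    simp [Real.sin_pi]
  have hint1 : IntervalIntegrable
      (fun t : ℝ => ((Real.sqrt 2 * (Real.cos (π*t) * π) : ℝ) : ℂ) * Complex.exp (-(Complex.I * u * t)))
      volume 0 1 := by
    apply Continuous.intervalIntegrable; fun_prop
  have hint2 : IntervalIntegrable
      (fun t : ℝ => ((Real.sqrt 2 * Real.sin (π*t) : ℝ) : ℂ) * (Complex.exp (-(Complex.I * u * t)) * c))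
      volume 0 1 := by
    apply Continuous.intervalIntegrable; fun_prop
  rw [intervalIntegral.integral_add hint1 hint2] at h0'
  have h2 : (∫ t in (0:ℝ)..1,
      ((Real.sqrt 2 * Real.sin (π*t) : ℝ) : ℂ) * (Complex.exp (-(Complex.I * u * t)) * c))
      = c * ∫ t in (0:ℝ)..1,
          ((Real.sqrt 2 * Real.sin (π*t) : ℝ) : ℂ) * Complex.exp (-(Complex.I * u * t)) := by
    rw [← intervalIntegral.integral_const_mul]
    congr 1; funext t; ring
  have h3 : (∫ t in (0:ℝ)..1,
      ((Real.sqrt 2 * (Real.cos (π*t) * π) : ℝ) : ℂ) * Complex.exp (-(Complex.I * u * t)))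
      = ∫ t in (0:ℝ)..1,
          ((Real.sqrt 2 * π * Real.cos (π*t) : ℝ) : ℂ) * Complex.exp (-(Complex.I * u * t)) := by
    congr 1; funext t
    have : Real.sqrt 2 * (Real.cos (π*t) * π) = Real.sqrt 2 * π * Real.cos (π*t) := by ring
    rw [this]
  rw [h3, h2] at h0'
  have : (∫ t in (0:ℝ)..1,
      ((Real.sqrt 2 * π * Real.cos (π*t) : ℝ) : ℂ) * Complex.exp (-(Complex.I * u * t)))
      = - (c * ∫ t in (0:ℝ)..1,
          ((Real.sqrt 2 * Real.sin (π*t) : ℝ) : ℂ) * Complex.exp (-(Complex.I * u * t))) := by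
    linear_combination h0'
  rw [this, hc]
  ring

lemma GG_re_im (u : ℝ) :
    (∫ t : ℝ, (gg t : ℂ) * Complex.exp (-(Complex.I * u * t)))
      = ((AA u : ℝ) : ℂ) - ((BB u : ℝ) : ℂ) * Complex.I := by
  have e : ∀ t : ℝ, (gg t : ℂ) * Complex.exp (-(Complex.I * u * t))
      = ((gg t * Real.cos (u*t) : ℝ) : ℂ) + ((-(gg t * Real.sin (u*t)) : ℝ) : ℂ) * Complex.I := by
    intro t
    have harg : -(Complex.I * u * t) = ((-(u*t) : ℝ) : ℂ) * Complex.I := by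
      push_cast; ring
    rw [harg, Complex.exp_mul_I, ← Complex.ofReal_cos, ← Complex.ofReal_sin]
    push_cast [Real.cos_neg, Real.sin_neg]
    ring
  rw [integral_congr_ae (Filter.Eventually.of_forall e)]
  have h1 : Integrable (fun t : ℝ => ((gg t * Real.cos (u*t) : ℝ) : ℂ)) :=
    (integrable_gg_mul (by fun_prop) (fun t => abs_cos_le_one _)).ofReal
  have h2 : Integrable (fun t : ℝ => ((-(gg t * Real.sin (u*t)) : ℝ) : ℂ) * Complex.I) :=
    ((integrable_gg_mul (by fun_prop) (fun t => abs_sin_le_one _)).neg.ofReal).mul_const _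
  rw [integral_add h1 h2, integral_mul_const]
  rw [show (∫ t : ℝ, ((gg t * Real.cos (u*t) : ℝ) : ℂ)) = (((∫ t : ℝ, gg t * Real.cos (u*t) : ℝ)) : ℂ) from integral_ofReal,
      show (∫ t : ℝ, ((-(gg t * Real.sin (u*t)) : ℝ) : ℂ)) = (((∫ t : ℝ, -(gg t * Real.sin (u*t)) : ℝ)) : ℂ) from integral_ofReal]
  have h3 : (∫ t : ℝ, -(gg t * Real.sin (u*t))) = - BB u := by
    rw [integral_neg]; rfl
  have h4 : (∫ t : ℝ, gg t * Real.cos (u*t)) = AA u := rfl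
  rw [h3, h4]
  push_cast
  ring

lemma pointwise_eq (u : ℝ) :
    u^2 * ‖fourierTr w0 u‖^2 = AA u^2 + BB u^2 := by
  have h1 : ((AA u : ℝ) : ℂ) - ((BB u : ℝ) : ℂ) * Complex.I
      = Complex.I * u * fourierTr w0 u := by
    rw [← GG_re_im, GG_interval, ibp, fourierTr_w0_interval]
  have h2 : ‖((AA u : ℝ) : ℂ) - ((BB u : ℝ) : ℂ) * Complex.I‖^2 = AA u^2 + BB u^2 := by
    rw [← Complex.normSq_eq_norm_sq, Complex.normSq_apply]
    simp
    ring
  rw [h1] at h2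
  rw [← h2, norm_mul, norm_mul, Complex.norm_I, one_mul, Complex.norm_real,
      Real.norm_eq_abs, mul_pow, sq_abs]

lemma w0_norm : ∫ t : ℝ, w0 t^2 = 1 := by
  have e : (fun t => w0 t^2) = indicator (Icc (0:ℝ) 1) (fun t => 2*Real.sin (π*t)^2) := by
    funext t
    by_cases h : t ∈ Icc (0:ℝ) 1
    · rw [indicator_of_mem h]
      simp only [w0, h, if_pos]
      have h2 : Real.sqrt 2 * Real.sqrt 2 = 2 := Real.mul_self_sqrt (by norm_num)
      nlinarith [h2]
    · rw [indicator_of_notMem h]; simp [w0, h]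
  rw [e, integral_indicator measurableSet_Icc,
      integral_Icc_eq_integral_Ioc, ← intervalIntegral.integral_of_le (by norm_num : (0:ℝ) ≤ 1)]
  have hderiv : ∀ t ∈ uIcc (0:ℝ) 1, HasDerivAt
      (fun t => t - Real.sin (π*t)*Real.cos (π*t)/π)
      (2*Real.sin (π*t)^2) t := by
    intro t _
    have hid : HasDerivAt (fun t : ℝ => π*t) π t := by
      simpa using (hasDerivAt_id t).const_mul π
    have hsin : HasDerivAt (fun t : ℝ => Real.sin (π*t)) (Real.cos (π*t) * π) t :=
      (Real.hasDerivAt_sin _).comp t hid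
    have hcos : HasDerivAt (fun t : ℝ => Real.cos (π*t)) (-Real.sin (π*t) * π) t :=
      (Real.hasDerivAt_cos _).comp t hid
    have h1 := ((hsin.mul hcos).div_const π)
    have h2 := (hasDerivAt_id t).sub h1
    refine HasDerivAt.congr_deriv h2 ?_
    have hpy : Real.sin (π*t)^2 + Real.cos (π*t)^2 = 1 := Real.sin_sq_add_cos_sq _
    have hπ : π ≠ 0 := ne_of_gt pi_pos
    have hX : (Real.cos (π*t) * π * Real.cos (π*t) + Real.sin (π*t) * (-Real.sin (π*t) * π)) / π
        = Real.cos (π*t)^2 - Real.sin (π*t)^2 := by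
      rw [div_eq_iff hπ]; ring
    linear_combination -hpy - hX
  rw [intervalIntegral.integral_eq_sub_of_hasDerivAt hderiv]
  · simp [Real.sin_pi]
  · apply Continuous.intervalIntegrable
    fun_prop

end Stmt13

/-- the lowest Dirichlet eigenfunction `w₀(t) = √2 sin(π t)` on
`[0,1]`, extended by zero, is normalized (`∫ w₀² = 1`) and attains the minimal
value `π³/2` of the functional `I = ½ ∫₀^∞ u² |ŵ₀(u)|² du`. -/
theorem I_attains_minimum
    (w₀ : ℝ → ℝ)
    (hw₀ : ∀ t, w₀ t = if t ∈ Icc (0:ℝ) 1 then Real.sqrt 2 * Real.sin (π * t) else 0) :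
    ((∫ t : ℝ, w₀ t ^ 2) = 1) ∧
      (1 / 2) * (∫ u in Ioi (0:ℝ), u ^ 2 * ‖fourierTr w₀ u‖ ^ 2) = π ^ 3 / 2 := by
  have hw : w₀ = Stmt13.w0 := funext fun t => by rw [hw₀]; rfl
  subst hw
  constructor
  · exact Stmt13.w0_norm
  · have he : ∫ u in Ioi (0:ℝ), u ^ 2 * ‖fourierTr Stmt13.w0 u‖ ^ 2
        = ∫ u in Ioi (0:ℝ), (Stmt13.AA u^2 + Stmt13.BB u^2) :=
      integral_congr_ae (Filter.Eventually.of_forall fun u => Stmt13.pointwise_eq u)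
    rw [he, Stmt13.main_integral]
    ring
end

section
/- Let $R > 0$ and let $f, m, p, \rho : (0, R) \to \mathbb{R}$ with $f, m$ differentiable, and suppose that for all $r \in (0,R)$: $f(r) > 0$, $r - 2m(r) > 0$, $m'(r) = 4\pi r^2 \rho(r)$, and $f'(r) = f(r)\, \frac{2\left(m(r) + 4\pi r^3 p(r)\right)}{r\,(r - 2m(r))}$. Define $h(r) = 1 - 2m(r)/r$ and $g(r) = \sqrt{f(r) h(r)}$. Then $g$ is differentiable on $(0,R)$ and for every $r \in (0,R)$ the condition $\alpha(r) = \frac{g(r)\, g'(r)}{r} > 0$ holds if and only if $m(r) + 2\pi r^3\left[p(r) - \rho(r)\right] > 0$. -/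
open Real Set

/-- for a static spherically symmetric perfect-fluid spacetime
with `h(r) = 1 - 2m(r)/r`, `m' = 4π r² ρ`, and the TOV-type equation
`f' = f · 2(m + 4π r³ p)/(r(r - 2m))`, the function `g = √(f h)` is
differentiable on `(0,R)` and the condition `α(r) = g(r) g'(r)/r > 0` holds
iff `m(r) + 2π r³ (p(r) - ρ(r)) > 0`. -/
theorem ground_state_condition_perfect_fluid
    (R : ℝ) (hR : 0 < R) (f m p ρ : ℝ → ℝ)
    (hf_pos : ∀ r ∈ Ioo 0 R, 0 < f r)
    (hh_pos : ∀ r ∈ Ioo 0 R, 0 < r - 2 * m r)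
    (hm : ∀ r ∈ Ioo 0 R, HasDerivAt m (4 * π * r ^ 2 * ρ r) r)
    (hf : ∀ r ∈ Ioo 0 R,
      HasDerivAt f (f r * (2 * (m r + 4 * π * r ^ 3 * p r) / (r * (r - 2 * m r)))) r)
    (g : ℝ → ℝ)
    (hg : ∀ r, g r = Real.sqrt (f r * (1 - 2 * m r / r))) :
    (∀ r ∈ Ioo 0 R, DifferentiableAt ℝ g r) ∧
      ∀ r ∈ Ioo 0 R,
        (0 < g r * deriv g r / r ↔ 0 < m r + 2 * π * r ^ 3 * (p r - ρ r)) := by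
  have hgf : g = fun r => Real.sqrt (f r * (1 - 2 * m r / r)) := funext hg
  have hFpos : ∀ r ∈ Ioo 0 R, 0 < f r * (1 - 2 * m r / r) := by
    intro r hr
    have hr0 : 0 < r := hr.1
    have : 1 - 2 * m r / r = (r - 2 * m r) / r := by field_simp
    rw [this]
    exact mul_pos (hf_pos r hr) (div_pos (hh_pos r hr) hr0)
  have key : ∀ r ∈ Ioo 0 R, HasDerivAt g
      ((4 * f r / r ^ 2 * (m r + 2 * π * r ^ 3 * (p r - ρ r))) /
        (2 * Real.sqrt (f r * (1 - 2 * m r / r)))) r := by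
    intro r hr
    have hr0 : 0 < r := hr.1
    have hrm : 0 < r - 2 * m r := hh_pos r hr
    have hdiv : HasDerivAt (fun s => 2 * m s / s)
        ((2 * (4 * π * r ^ 2 * ρ r) * r - 2 * m r * 1) / r ^ 2) r :=
      (((hm r hr).const_mul 2).div (hasDerivAt_id r) hr0.ne')
    have hh : HasDerivAt (fun s => 1 - 2 * m s / s)
        (0 - (2 * (4 * π * r ^ 2 * ρ r) * r - 2 * m r * 1) / r ^ 2) r :=
      (hasDerivAt_const r (1 : ℝ)).sub hdiv
    have hF : HasDerivAt (fun s => f s * (1 - 2 * m s / s))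
        (4 * f r / r ^ 2 * (m r + 2 * π * r ^ 3 * (p r - ρ r))) r := by
      have := (hf r hr).mul hh
      refine this.congr_deriv ?_
      field_simp
      ring
    rw [hgf]
    exact hF.sqrt (hFpos r hr).ne'
  refine ⟨fun r hr => (key r hr).differentiableAt, fun r hr => ?_⟩
  have hr0 : 0 < r := hr.1
  have hs : 0 < Real.sqrt (f r * (1 - 2 * m r / r)) := Real.sqrt_pos.mpr (hFpos r hr)
  have hsq : Real.sqrt (f r * (1 - 2 * m r / r)) ^ 2 = f r * (1 - 2 * m r / r) :=
    Real.sq_sqrt (hFpos r hr).le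
  have heq : g r * deriv g r / r =
      (2 * f r / r ^ 3) * (m r + 2 * π * r ^ 3 * (p r - ρ r)) := by
    rw [hg r, (key r hr).deriv, ← mul_div_assoc,
      mul_comm (2 : ℝ) (Real.sqrt (f r * (1 - 2 * m r / r))),
      mul_div_mul_left _ _ hs.ne']
    field_simp
    ring
  rw [heq]
  have hc : 0 < 2 * f r / r ^ 3 := by
    have := hf_pos r hr
    positivity
  constructor
  · intro h
    by_contra hx
    push_neg at hx
    nlinarith
  · intro h
    exact mul_pos hc h
end
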